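/- Let K be an algebraically closed field and f ∈ K[x_1,…,x_n] nonzero. Assume f is Newton non-degenerate: for every ω ∈ (ℝ_{≥0})^n and every z ∈ (K^*)^n with (In_ω f)(z) = 0, there exists j ∈ {1,…,n} with (∂(In_ω f)/∂x_j)(z) ≠ 0. Let M be an n×n unimodular matrix with nonnegative integer entries such that In_u f is the same polynomial for all u = Mλ with λ ∈ (ℝ_{>0})^n (the cone generated by the columns of M is good for f), and write f∘φ_{M^t} = x^P·h with P ∈ ℕ^n and h(0) ≠ 0. Then for every s ∈ {1,…,n} and every point y = (0,…,0,y_{s+1},…,y_n) ∈ K^n with y_i ≠ 0 for i > s and h(y) = 0, there exists j ∈ {s+1,…,n} with (∂h/∂x_j)(y) ≠ 0; i.e. the strict transform of the hypersurface V(f) in the chart associated to M is nonsingular at y and transversal to the coordinate subspace {x_1 = ⋯ = x_s = 0}. -/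

import Mathlib

open MvPolynomial Matrix

open Classical in
/-- The `w`-initial part of a multivariate polynomial: the sum of the terms whose
exponents have minimal `w`-weight among the exponents of `f`. -/
noncomputable def initialPart {n : ℕ} {K : Type*} [CommSemiring K] (w : Fin n → ℝ)
    (f : MvPolynomial (Fin n) K) : MvPolynomial (Fin n) K :=
  ∑ μ ∈ f.support,
    if ∀ ν ∈ f.support, ∑ i, w i * (μ i : ℝ) ≤ ∑ i, w i * (ν i : ℝ)
    then monomial μ (f.coeff μ) else 0

/-- The monomial substitution `φ_M` on polynomials: `x_i ↦ ∏_j x_j ^ (M j i)`,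
so that `x^μ ↦ x^(Mμ)`. -/
noncomputable def monomialSubst {n : ℕ} {K : Type*} [CommSemiring K]
    (M : Matrix (Fin n) (Fin n) ℕ) (f : MvPolynomial (Fin n) K) : MvPolynomial (Fin n) K :=
  aeval (fun i => ∏ j, (X j : MvPolynomial (Fin n) K) ^ M j i) f

/-- A nonnegative integer square matrix is unimodular if its determinant (over `ℤ`) is `±1`. -/
def IsUnimodular {n : ℕ} (M : Matrix (Fin n) (Fin n) ℕ) : Prop :=
  (M.map fun a => (a : ℤ)).det = 1 ∨ (M.map fun a => (a : ℤ)).det = -1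

section StrictTransformHelpers


variable {n : ℕ} {K : Type*}

noncomputable def wt (w : Fin n → ℝ) (μ : Fin n →₀ ℕ) : ℝ := ∑ i, w i * (μ i : ℝ)

lemma wt_add (w : Fin n → ℝ) (α β : Fin n →₀ ℕ) : wt w (α + β) = wt w α + wt w β := by
  simp [wt, mul_add, Finset.sum_add_distrib]

noncomputable def expMap (N : Matrix (Fin n) (Fin n) ℕ) (μ : Fin n →₀ ℕ) : Fin n →₀ ℕ :=
  Finsupp.equivFunOnFinite.symm (fun j => ∑ k, N j k * μ k)

lemma expMap_apply (N : Matrix (Fin n) (Fin n) ℕ) (μ : Fin n →₀ ℕ) (j : Fin n) :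
    expMap N μ j = ∑ k, N j k * μ k := rfl

lemma det_map_ne_zero {F : Type*} [Field F] {N : Matrix (Fin n) (Fin n) ℕ}
    (hN : IsUnimodular N) : (N.map ((↑) : ℕ → F)).det ≠ 0 := by
  have hmap : N.map ((↑) : ℕ → F)
      = (N.map ((↑) : ℕ → ℤ)).map ⇑(Int.castRingHom F) := by
    rw [Matrix.map_map]
    ext i k
    simp
  have hdet := RingHom.map_det (Int.castRingHom F) (N.map ((↑) : ℕ → ℤ))
  rw [RingHom.mapMatrix_apply] at hdet
  rw [hmap, ← hdet]
  rcases hN with h | h <;> rw [h] <;> simp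

lemma mulVec_injective_of_unimodular {F : Type*} [Field F] {N : Matrix (Fin n) (Fin n) ℕ}
    (hN : IsUnimodular N) : Function.Injective ((N.map ((↑) : ℕ → F)).mulVec) :=
  Matrix.mulVec_injective_iff_isUnit.2 ((Matrix.isUnit_iff_isUnit_det _).2
    (isUnit_iff_ne_zero.2 (det_map_ne_zero hN)))

lemma unimodular_transpose {N : Matrix (Fin n) (Fin n) ℕ} (hN : IsUnimodular N) :
    IsUnimodular Nᵀ := by
  unfold IsUnimodular at *
  rw [show (Nᵀ.map fun a => (a : ℤ)) = (N.map fun a => (a : ℤ))ᵀ from Matrix.transpose_map,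
    Matrix.det_transpose]
  exact hN

lemma expMap_injective {N : Matrix (Fin n) (Fin n) ℕ} (hN : IsUnimodular N) :
    Function.Injective (expMap N) := by
  intro μ μ' hE
  have h1 : ∀ j, ∑ k, N j k * μ k = ∑ k, N j k * μ' k := by
    intro j
    have := congrArg (fun F => F j) hE
    simpa [expMap] using this
  have h2 : (N.map ((↑) : ℕ → ℚ)).mulVec (fun k => (μ k : ℚ))
      = (N.map ((↑) : ℕ → ℚ)).mulVec (fun k => (μ' k : ℚ)) := by
    funext j
    simp only [Matrix.mulVec, dotProduct, Matrix.map_apply]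
    exact_mod_cast congrArg (fun m : ℕ => (m : ℚ)) (h1 j)
  have h3 := mulVec_injective_of_unimodular (F := ℚ) hN h2
  ext k
  exact_mod_cast congrFun h3 k


variable [CommSemiring K]

lemma prod_prod_pow {Mo : Type*} [CommMonoid Mo] (v : Fin n → Mo)
    (N : Matrix (Fin n) (Fin n) ℕ) (μ : Fin n →₀ ℕ) :
    ∏ i, (∏ j, v j ^ N j i) ^ μ i = ∏ j, v j ^ (expMap N μ j) := by
  calc ∏ i, (∏ j, v j ^ N j i) ^ μ i
      = ∏ i, ∏ j, v j ^ (N j i * μ i) := by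
        refine Finset.prod_congr rfl fun i _ => ?_
        rw [← Finset.prod_pow]
        exact Finset.prod_congr rfl fun j _ => by rw [← pow_mul]
    _ = ∏ j, ∏ i, v j ^ (N j i * μ i) := Finset.prod_comm
    _ = ∏ j, v j ^ (expMap N μ j) := by
        refine Finset.prod_congr rfl fun j _ => ?_
        rw [expMap_apply]
        exact Finset.prod_pow_eq_pow_sum _ _ _

lemma monomialSubst_monomial (N : Matrix (Fin n) (Fin n) ℕ) (μ : Fin n →₀ ℕ) (a : K) :
    monomialSubst N (monomial μ a) = monomial (expMap N μ) a := by
  rw [monomialSubst, aeval_monomial, monomial_eq]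
  congr 1
  rw [Finsupp.prod_pow, Finsupp.prod_pow]
  exact prod_prod_pow _ N μ

lemma monomialSubst_sum {ι : Type*} (N : Matrix (Fin n) (Fin n) ℕ) (S : Finset ι)
    (g : ι → MvPolynomial (Fin n) K) :
    monomialSubst N (∑ i ∈ S, g i) = ∑ i ∈ S, monomialSubst N (g i) := by
  simp only [monomialSubst]
  exact map_sum _ _ _

lemma coeff_sum_monomial_eq {ι : Type*} {S : Finset ι} {e : ι → (Fin n →₀ ℕ)}
    (he : Set.InjOn e ↑S) (c : ι → K) {i : ι} (hi : i ∈ S) :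
    coeff (e i) (∑ j ∈ S, monomial (e j) (c j)) = c i := by
  classical
  rw [coeff_sum]
  rw [Finset.sum_eq_single i]
  · simp [coeff_monomial]
  · intro j hj hne
    rw [coeff_monomial,
      if_neg (fun hc => hne (he (Finset.mem_coe.2 hj) (Finset.mem_coe.2 hi) hc))]
  · intro hS; exact absurd hi hS

lemma coeff_sum_monomial_ne {ι : Type*} {S : Finset ι} {e : ι → (Fin n →₀ ℕ)}
    {α : Fin n →₀ ℕ} (hα : ∀ j ∈ S, e j ≠ α) (c : ι → K) :
    coeff α (∑ j ∈ S, monomial (e j) (c j)) = 0 := by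
  classical
  rw [coeff_sum]
  exact Finset.sum_eq_zero fun j hj => by rw [coeff_monomial, if_neg (hα j hj)]

lemma initialPart_parts (w : Fin n → ℝ) (f : MvPolynomial (Fin n) K) :
    ∃ S : Finset (Fin n →₀ ℕ),
      (∀ μ, μ ∈ S ↔ μ ∈ f.support ∧ ∀ ν ∈ f.support, wt w μ ≤ wt w ν) ∧
      initialPart w f = ∑ μ ∈ S, monomial μ (f.coeff μ) := by
  classical
  refine ⟨f.support.filter (fun μ => ∀ ν ∈ f.support, wt w μ ≤ wt w ν),
    fun μ => Finset.mem_filter, ?_⟩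
  rw [Finset.sum_filter, initialPart]
  exact Finset.sum_congr rfl fun μ _ => by
    unfold wt
    split_ifs <;> rfl

lemma eval_sum_monomial {ι : Type*} (v : Fin n → K) (S : Finset ι)
    (e : ι → (Fin n →₀ ℕ)) (c : ι → K) :
    eval v (∑ i ∈ S, monomial (e i) (c i)) = ∑ i ∈ S, c i * ∏ j, v j ^ (e i j) := by
  rw [map_sum]
  exact Finset.sum_congr rfl fun i _ => by rw [eval_monomial, Finsupp.prod_pow]

lemma pderiv_sum_monomial {ι : Type*} (j : Fin n) (S : Finset ι)
    (e : ι → (Fin n →₀ ℕ)) (c : ι → K) :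
    pderiv j (∑ i ∈ S, monomial (e i) (c i))
      = ∑ i ∈ S, monomial (e i - Finsupp.single j 1) (c i * (e i j)) := by
  rw [map_sum]
  exact Finset.sum_congr rfl fun i _ => pderiv_monomial

lemma prod_pow_congr (v v' : Fin n → K) (α : Fin n →₀ ℕ)
    (hc : ∀ i, v i ≠ v' i → α i = 0) : ∏ i, v i ^ α i = ∏ i, v' i ^ α i :=
  Finset.prod_congr rfl fun i _ => by
    by_cases hv : v i = v' i
    · rw [hv]
    · rw [hc i hv, pow_zero, pow_zero]

lemma mul_prod_pow_sub_single (v : Fin n → K) (α : Fin n →₀ ℕ) (j : Fin n)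
    (hpos : α j ≠ 0) :
    v j * ∏ i, v i ^ (((α - Finsupp.single j 1 : Fin n →₀ ℕ)) i) = ∏ i, v i ^ α i := by
  set β : Fin n →₀ ℕ := α - Finsupp.single j 1 with hβ
  rw [← Finset.mul_prod_erase Finset.univ
      (fun i => v i ^ β i) (Finset.mem_univ j),
    ← Finset.mul_prod_erase Finset.univ (fun i => v i ^ α i) (Finset.mem_univ j),
    ← mul_assoc]
  have h1 : v j * v j ^ β j = v j ^ α j := by
    rw [hβ]
    rw [Finsupp.tsub_apply, Finsupp.single_eq_same]
    conv_rhs => rw [← Nat.succ_pred_eq_of_pos (Nat.pos_of_ne_zero hpos)]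
    rw [pow_succ']
    rfl
  rw [h1]
  congr 1
  refine Finset.prod_congr rfl fun i hi => ?_
  rw [hβ, Finsupp.tsub_apply, Finsupp.single_eq_of_ne' (Finset.ne_of_mem_erase hi).symm,
      Nat.sub_zero]

lemma cast_mul_prod_sub (v : Fin n → K) (α : Fin n →₀ ℕ) (j : Fin n) :
    (α j : K) * (v j * ∏ i, v i ^ (((α - Finsupp.single j 1 : Fin n →₀ ℕ)) i))
      = (α j : K) * ∏ i, v i ^ α i := by
  rcases eq_or_ne (α j) 0 with h0 | hne
  · rw [h0]; simp
  · rw [mul_prod_pow_sub_single v α j hne]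



end StrictTransformHelpers

/-- Let `f` be a nonzero Newton non-degenerate polynomial (for every
nonnegative `ω`, the hypersurface `V(In_ω f)` has no singular point in the torus).  Let
`M` be a nonnegative unimodular matrix whose column cone is good for `f`, and write
`f ∘ φ_{Mᵀ} = x^P · h` with `h(0) ≠ 0`.  Then at every point `y` of the strict transform
lying on the orbit `{x_1 = ⋯ = x_s = 0, x_{s+1} ⋯ x_n ≠ 0}` there is a coordinate
`j > s` with `(∂h/∂x_j)(y) ≠ 0`: the strict transform is nonsingular at `y` and
transversal to the coordinate subspace. -/
theorem strict_transform_nonsingular {n : ℕ} {K : Type*} [Field K] [IsAlgClosed K]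
    (f : MvPolynomial (Fin n) K) (hf : f ≠ 0)
    (hnd : ∀ w : Fin n → ℝ, (∀ i, 0 ≤ w i) → ∀ z : Fin n → K, (∀ i, z i ≠ 0) →
      eval z (initialPart w f) = 0 → ∃ j : Fin n, eval z (pderiv j (initialPart w f)) ≠ 0)
    (M : Matrix (Fin n) (Fin n) ℕ) (hM : IsUnimodular M)
    (hgood : ∀ lam lam' : Fin n → ℝ, (∀ i, 0 < lam i) → (∀ i, 0 < lam' i) →
      initialPart ((M.map ((↑) : ℕ → ℝ)).mulVec lam) f =
        initialPart ((M.map ((↑) : ℕ → ℝ)).mulVec lam') f)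
    (P : Fin n →₀ ℕ) (h : MvPolynomial (Fin n) K)
    (hfac : monomialSubst Mᵀ f = monomial P 1 * h)
    (hh0 : eval (0 : Fin n → K) h ≠ 0)
    (s : ℕ) (hs1 : 1 ≤ s) (hsn : s ≤ n) (y : Fin n → K)
    (hy0 : ∀ i : Fin n, (i : ℕ) < s → y i = 0)
    (hy1 : ∀ i : Fin n, s ≤ (i : ℕ) → y i ≠ 0)
    (hyh : eval y h = 0) :
    ∃ j : Fin n, s ≤ (j : ℕ) ∧ eval y (pderiv j h) ≠ 0 := by
  classical
  have hMT : IsUnimodular Mᵀ := unimodular_transpose hM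
  have hEinj : Function.Injective (expMap Mᵀ) := expMap_injective hMT
  set lam : Fin n → ℝ := fun j => if (j : ℕ) < s then 1 else 0 with hlamdef
  set ω : Fin n → ℝ := fun k => ∑ j, lam j * (M k j : ℝ) with hωdef
  have hlam0 : ∀ j, 0 ≤ lam j := fun j => by
    rw [hlamdef]; dsimp only; split_ifs <;> norm_num
  have hω0 : ∀ k, 0 ≤ ω k := fun k => Finset.sum_nonneg fun j _ =>
    mul_nonneg (hlam0 j) (Nat.cast_nonneg _)
  have hwtnn : ∀ (w : Fin n → ℝ), (∀ i, 0 ≤ w i) → ∀ α : Fin n →₀ ℕ, 0 ≤ wt w α :=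
    fun w hw α => Finset.sum_nonneg fun i _ => mul_nonneg (hw i) (Nat.cast_nonneg _)
  have hwtE : ∀ μ : Fin n →₀ ℕ, wt lam (expMap Mᵀ μ) = wt ω μ := by
    intro μ
    unfold wt
    rw [hωdef]
    simp only [expMap_apply]
    push_cast
    simp_rw [Finset.mul_sum, Finset.sum_mul]
    rw [Finset.sum_comm]
    exact Finset.sum_congr rfl fun k _ => Finset.sum_congr rfl fun j _ => by
      rw [Matrix.transpose_apply]; ring
  obtain ⟨Sf, hSfmem, hg⟩ := initialPart_parts ω f
  obtain ⟨Sh, hShmem, hh₀⟩ := initialPart_parts lam h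
  have hShsub : Sh ⊆ h.support := fun ν hν => ((hShmem ν).1 hν).1
  have hfsum : monomialSubst Mᵀ f
      = ∑ μ ∈ f.support, monomial (expMap Mᵀ μ) (f.coeff μ) := by
    calc monomialSubst Mᵀ f
        = monomialSubst Mᵀ (∑ μ ∈ f.support, monomial μ (f.coeff μ)) := by rw [← as_sum]
      _ = ∑ μ ∈ f.support, monomial (expMap Mᵀ μ) (f.coeff μ) := by
          rw [monomialSubst_sum]
          exact Finset.sum_congr rfl fun μ _ => monomialSubst_monomial Mᵀ μ _
  have hhsum : monomial P 1 * h = ∑ ν ∈ h.support, monomial (P + ν) (h.coeff ν) := by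
    calc monomial P 1 * h
        = monomial P 1 * ∑ ν ∈ h.support, monomial ν (h.coeff ν) := by rw [← as_sum]
      _ = ∑ ν ∈ h.support, monomial (P + ν) (h.coeff ν) := by
          rw [Finset.mul_sum]
          exact Finset.sum_congr rfl fun ν _ => by rw [monomial_mul, one_mul]
  have hPinj : Set.InjOn (fun ν : Fin n →₀ ℕ => P + ν) ↑h.support :=
    fun a _ b _ hab => by simpa using hab
  have hcorr : ∀ μ ∈ f.support, ∃ ν ∈ h.support,
      P + ν = expMap Mᵀ μ ∧ h.coeff ν = f.coeff μ := by
    intro μ hμ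
    have hco : coeff (expMap Mᵀ μ) (monomialSubst Mᵀ f) = f.coeff μ := by
      rw [hfsum]; exact coeff_sum_monomial_eq (hEinj.injOn) (fun μ' => coeff μ' f) hμ
    rw [hfac, hhsum] at hco
    by_cases hex : ∃ ν ∈ h.support, P + ν = expMap Mᵀ μ
    · obtain ⟨ν, hν, hPν⟩ := hex
      refine ⟨ν, hν, hPν, ?_⟩
      rw [← hco, ← hPν]
      exact (coeff_sum_monomial_eq hPinj (fun ν' => coeff ν' h) hν).symm
    · push_neg at hex
      rw [coeff_sum_monomial_ne hex _] at hco
      exact absurd hco.symm (MvPolynomial.mem_support_iff.1 hμ)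
  have hcorr' : ∀ ν ∈ h.support, ∃ μ ∈ f.support,
      P + ν = expMap Mᵀ μ ∧ h.coeff ν = f.coeff μ := by
    intro ν hν
    have hco : coeff (P + ν) (monomial P 1 * h) = h.coeff ν := by
      rw [hhsum]; exact coeff_sum_monomial_eq hPinj (fun ν' => coeff ν' h) hν
    rw [← hfac, hfsum] at hco
    by_cases hex : ∃ μ ∈ f.support, expMap Mᵀ μ = P + ν
    · obtain ⟨μ, hμ, hEμ⟩ := hex
      refine ⟨μ, hμ, hEμ.symm, ?_⟩
      rw [← hco, ← hEμ]
      exact coeff_sum_monomial_eq hEinj.injOn (fun μ' => coeff μ' f) hμ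
    · push_neg at hex
      rw [coeff_sum_monomial_ne (fun μ hμ => hex μ hμ) _] at hco
      exact absurd hco.symm (MvPolynomial.mem_support_iff.1 hν)
  have hminFH : ∀ μ ∈ f.support, ∀ ν ∈ h.support, P + ν = expMap Mᵀ μ →
      ((∀ μ' ∈ f.support, wt ω μ ≤ wt ω μ') ↔
        (∀ ν' ∈ h.support, wt lam ν ≤ wt lam ν')) := by
    intro μ hμ ν hν hPν
    have hkey : wt lam P + wt lam ν = wt ω μ := by rw [← wt_add, hPν, hwtE]
    constructor
    · intro hmin ν' hν'
      obtain ⟨μ', hμ', hPν', _⟩ := hcorr' ν' hν'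
      have h2 : wt lam P + wt lam ν' = wt ω μ' := by rw [← wt_add, hPν', hwtE]
      have h3 := hmin μ' hμ'
      linarith
    · intro hmin μ' hμ'
      obtain ⟨ν', hν', hPν'', _⟩ := hcorr μ' hμ'
      have h2 : wt lam P + wt lam ν' = wt ω μ' := by rw [← wt_add, hPν'', hwtE]
      have h3 := hmin ν' hν'
      linarith
  have hφg : monomialSubst Mᵀ (initialPart ω f)
      = ∑ μ ∈ Sf, monomial (expMap Mᵀ μ) (f.coeff μ) := by
    rw [hg, monomialSubst_sum]
    exact Finset.sum_congr rfl fun μ _ => monomialSubst_monomial Mᵀ μ _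
  have hPh₀ : monomial P 1 * initialPart lam h
      = ∑ ν ∈ Sh, monomial (P + ν) (h.coeff ν) := by
    rw [hh₀, Finset.mul_sum]
    exact Finset.sum_congr rfl fun ν _ => by rw [monomial_mul, one_mul]
  have hShinj : Set.InjOn (fun ν : Fin n →₀ ℕ => P + ν) ↑Sh :=
    fun a _ b _ hab => by simpa using hab
  have hC1 : monomialSubst Mᵀ (initialPart ω f) = monomial P 1 * initialPart lam h := by
    rw [hφg, hPh₀]
    apply MvPolynomial.ext
    intro α
    by_cases hα : ∃ μ ∈ Sf, expMap Mᵀ μ = α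
    · obtain ⟨μ, hμSf, hEα⟩ := hα
      obtain ⟨hμf, hμmin⟩ := (hSfmem μ).1 hμSf
      obtain ⟨ν, hνh, hPν, hcoef⟩ := hcorr μ hμf
      have hνSh : ν ∈ Sh := (hShmem ν).2 ⟨hνh, (hminFH μ hμf ν hνh hPν).1 hμmin⟩
      have hL : coeff (expMap Mᵀ μ)
          (∑ μ' ∈ Sf, monomial (expMap Mᵀ μ') (f.coeff μ')) = f.coeff μ :=
        coeff_sum_monomial_eq (hEinj.injOn) (fun μ' => coeff μ' f) hμSf
      have hR : coeff (P + ν)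
          (∑ ν' ∈ Sh, monomial (P + ν') (h.coeff ν')) = h.coeff ν :=
        coeff_sum_monomial_eq hShinj (fun ν' => coeff ν' h) hνSh
      rw [← hEα, hL, ← hPν, hR]
      exact hcoef.symm
    · push_neg at hα
      have hα' : ∀ ν ∈ Sh, P + ν ≠ α := by
        intro ν hνSh hPν
        obtain ⟨hνh, hνmin⟩ := (hShmem ν).1 hνSh
        obtain ⟨μ, hμf, hPμ, _⟩ := hcorr' ν hνh
        have hμmin := (hminFH μ hμf ν hνh hPμ).2 hνmin
        exact hα μ ((hSfmem μ).2 ⟨hμf, hμmin⟩) (by rw [← hPμ, hPν])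
      have hL : coeff α (∑ μ' ∈ Sf, monomial (expMap Mᵀ μ') (f.coeff μ')) = 0 :=
        coeff_sum_monomial_ne hα _
      have hR : coeff α (∑ ν' ∈ Sh, monomial (P + ν') (h.coeff ν')) = 0 :=
        coeff_sum_monomial_ne hα' _
      rw [hL, hR]
  -- torus point
  set yt : Fin n → K := fun i => if (i : ℕ) < s then 1 else y i with hytdef
  have hyt : ∀ i, yt i ≠ 0 := by
    intro i
    rw [hytdef]; dsimp only
    split_ifs with hi
    · exact one_ne_zero
    · exact hy1 i (le_of_not_gt hi)
  have hyty : ∀ i : Fin n, yt i ≠ y i → (i : ℕ) < s := by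
    intro i hi
    by_contra hn
    apply hi
    rw [hytdef]; dsimp only; rw [if_neg hn]
  set z : Fin n → K := fun i => ∏ j, yt j ^ Mᵀ j i with hzdef
  have hz : ∀ i, z i ≠ 0 := by
    intro i
    rw [hzdef]; dsimp only
    exact Finset.prod_ne_zero_iff.2 fun j _ => pow_ne_zero _ (hyt j)
  have hzz : ∀ μ : Fin n →₀ ℕ, ∏ i, z i ^ μ i = ∏ i, yt i ^ (expMap Mᵀ μ i) := by
    intro μ
    rw [hzdef]
    exact prod_prod_pow yt Mᵀ μ
  have h0supp : (0 : Fin n →₀ ℕ) ∈ h.support := by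
    rw [MvPolynomial.mem_support_iff]
    intro hc
    apply hh0
    rw [eval_zero, constantCoeff_eq]
    exact hc
  have hwt0 : ∀ ν : Fin n →₀ ℕ, (∀ i : Fin n, (i : ℕ) < s → ν i = 0) → wt lam ν = 0 := by
    intro ν hν
    apply Finset.sum_eq_zero
    intro i _
    by_cases hi : (i : ℕ) < s
    · rw [hν i hi]; simp
    · rw [hlamdef]; dsimp only; rw [if_neg hi, zero_mul]
  have hSh0 : ∀ ν ∈ Sh, ∀ i : Fin n, (i : ℕ) < s → ν i = 0 := by
    intro ν hνSh i his
    obtain ⟨hνh, hνmin⟩ := (hShmem ν).1 hνSh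
    have h1 : wt lam ν ≤ 0 := by
      have := hνmin 0 h0supp
      simpa [wt] using this
    have h2 : wt lam ν = 0 := le_antisymm h1 (hwtnn lam hlam0 ν)
    have h3 : ∀ i ∈ Finset.univ, (0 : ℝ) ≤ lam i * (ν i : ℝ) :=
      fun i _ => mul_nonneg (hlam0 i) (Nat.cast_nonneg _)
    have h4 := (Finset.sum_eq_zero_iff_of_nonneg h3).1 h2 i (Finset.mem_univ i)
    rw [hlamdef] at h4; dsimp only at h4; rw [if_pos his, one_mul] at h4
    exact_mod_cast h4
  have hnotmin : ∀ ν ∈ h.support, ν ∉ Sh → ∃ i : Fin n, (i : ℕ) < s ∧ ν i ≠ 0 := by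
    intro ν hνh hνSh
    by_contra hc
    push_neg at hc
    apply hνSh
    refine (hShmem ν).2 ⟨hνh, fun ν' hν' => ?_⟩
    rw [hwt0 ν hc]
    exact hwtnn lam hlam0 ν'
  have heyth0 : eval yt (initialPart lam h) = 0 := by
    have e1 : eval yt (initialPart lam h) = eval y (initialPart lam h) := by
      rw [hh₀, eval_sum_monomial, eval_sum_monomial]
      refine Finset.sum_congr rfl fun ν hν => ?_
      congr 1
      exact prod_pow_congr yt y ν fun i hi => hSh0 ν hν i (hyty i hi)
    have e2 : eval y (initialPart lam h) = eval y h := by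
      rw [hh₀, eval_sum_monomial, eval_eq' y h]
      refine Finset.sum_subset hShsub fun ν hνh hνSh => ?_
      obtain ⟨i, his, hνi⟩ := hnotmin ν hνh hνSh
      refine mul_eq_zero_of_right _ ?_
      refine Finset.prod_eq_zero (Finset.mem_univ i) ?_
      rw [hy0 i his]
      exact zero_pow hνi
    rw [e1, e2, hyh]
  have hg0 : eval z (initialPart ω f) = 0 := by
    have e3 : eval z (initialPart ω f)
        = eval yt (monomialSubst Mᵀ (initialPart ω f)) := by
      rw [hφg, hg, eval_sum_monomial, eval_sum_monomial]
      exact Finset.sum_congr rfl fun μ _ => by rw [hzz μ]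
    rw [e3, hC1, _root_.map_mul, heyth0, mul_zero]
  obtain ⟨k₀, hk₀⟩ := hnd ω hω0 z hz hg0
  set v : Fin n → K := fun k => z k * eval z (pderiv k (initialPart ω f)) with hvdef
  have hvk₀ : v k₀ ≠ 0 := mul_ne_zero (hz k₀) hk₀
  have hAinj := mulVec_injective_of_unimodular (F := K) hMT
  have hMv : (Mᵀ.map ((↑) : ℕ → K)).mulVec v ≠ 0 := by
    intro hc
    apply hvk₀
    have hv0 : v = 0 := hAinj (by rw [hc, Matrix.mulVec_zero])
    rw [hv0]; rfl
  obtain ⟨j, hj⟩ := Function.ne_iff.1 hMv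
  have hjsum : ∑ k, (M k j : K) * v k ≠ 0 := by
    intro hc
    apply hj
    show (Mᵀ.map ((↑) : ℕ → K)).mulVec v j = (0 : Fin n → K) j
    rw [show (0 : Fin n → K) j = 0 from rfl, ← hc]
    simp [Matrix.mulVec, dotProduct, Matrix.map_apply, Matrix.transpose_apply]
  have hev1 : eval yt (pderiv j (∑ μ ∈ Sf, monomial (expMap Mᵀ μ) (f.coeff μ)))
      = ∑ μ ∈ Sf, f.coeff μ * ((expMap Mᵀ μ j : K)
          * ∏ i, yt i ^ ((expMap Mᵀ μ - Finsupp.single j 1 : Fin n →₀ ℕ) i)) := by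
    rw [pderiv_sum_monomial, eval_sum_monomial]
    exact Finset.sum_congr rfl fun μ _ => by push_cast; ring
  have hev2 : ∀ k, eval z (pderiv k (∑ μ ∈ Sf, monomial μ (f.coeff μ)))
      = ∑ μ ∈ Sf, f.coeff μ * ((μ k : K)
          * ∏ i, z i ^ ((μ - Finsupp.single k 1 : Fin n →₀ ℕ) i)) := by
    intro k
    rw [pderiv_sum_monomial, eval_sum_monomial]
    exact Finset.sum_congr rfl fun μ _ => by push_cast; ring
  have hchain : yt j * eval yt (pderiv j (monomialSubst Mᵀ (initialPart ω f)))
      = ∑ k, (M k j : K) * v k := by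
    rw [hφg, hev1, Finset.mul_sum]
    have hL : ∀ μ ∈ Sf,
        yt j * (f.coeff μ * ((expMap Mᵀ μ j : K)
            * ∏ i, yt i ^ ((expMap Mᵀ μ - Finsupp.single j 1 : Fin n →₀ ℕ) i)))
          = f.coeff μ * ((expMap Mᵀ μ j : K) * ∏ i, yt i ^ (expMap Mᵀ μ i)) := by
      intro μ _
      calc yt j * (f.coeff μ * ((expMap Mᵀ μ j : K)
              * ∏ i, yt i ^ ((expMap Mᵀ μ - Finsupp.single j 1 : Fin n →₀ ℕ) i)))
          = f.coeff μ * ((expMap Mᵀ μ j : K) * (yt j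
              * ∏ i, yt i ^ ((expMap Mᵀ μ - Finsupp.single j 1 : Fin n →₀ ℕ) i))) := by ring
        _ = f.coeff μ * ((expMap Mᵀ μ j : K) * ∏ i, yt i ^ (expMap Mᵀ μ i)) := by
            rw [cast_mul_prod_sub yt (expMap Mᵀ μ) j]
    rw [Finset.sum_congr rfl hL]
    have hR : ∀ k, (M k j : K) * v k
        = ∑ μ ∈ Sf, f.coeff μ * ((M k j : K) * ((μ k : K)
            * ∏ i, yt i ^ (expMap Mᵀ μ i))) := by
      intro k
      rw [hvdef]
      dsimp only
      rw [hg, hev2 k, Finset.mul_sum, Finset.mul_sum]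
      refine Finset.sum_congr rfl fun μ _ => ?_
      calc (M k j : K) * (z k * (f.coeff μ * ((μ k : K)
              * ∏ i, z i ^ ((μ - Finsupp.single k 1 : Fin n →₀ ℕ) i))))
          = f.coeff μ * ((M k j : K) * ((μ k : K) * (z k
              * ∏ i, z i ^ ((μ - Finsupp.single k 1 : Fin n →₀ ℕ) i)))) := by ring
        _ = f.coeff μ * ((M k j : K) * ((μ k : K) * ∏ i, z i ^ μ i)) := by
            rw [cast_mul_prod_sub z μ k]
        _ = f.coeff μ * ((M k j : K) * ((μ k : K) * ∏ i, yt i ^ (expMap Mᵀ μ i))) := by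
            rw [hzz μ]
    rw [Finset.sum_congr rfl fun k _ => hR k, Finset.sum_comm]
    refine Finset.sum_congr rfl fun μ _ => ?_
    have hsum : ((expMap Mᵀ μ j : ℕ) : K) = ∑ k, (M k j : K) * (μ k : K) := by
      rw [expMap_apply]
      push_cast
      exact Finset.sum_congr rfl fun k _ => by rw [Matrix.transpose_apply]
    rw [hsum, Finset.sum_mul, Finset.mul_sum]
    exact Finset.sum_congr rfl fun k _ => by ring
  have hpdne : eval yt (pderiv j (monomialSubst Mᵀ (initialPart ω f))) ≠ 0 := by
    intro hc
    apply hjsum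
    rw [← hchain, hc, mul_zero]
  rw [hC1, pderiv_mul, map_add, _root_.map_mul, _root_.map_mul, heyth0, mul_zero, zero_add] at hpdne
  have hEj : eval yt (pderiv j (initialPart lam h)) ≠ 0 := fun hc => hpdne (by rw [hc, mul_zero])
  have hjs : s ≤ (j : ℕ) := by
    by_contra hn
    push_neg at hn
    apply hEj
    rw [hh₀, pderiv_sum_monomial]
    have hzero : ∑ ν ∈ Sh, monomial (ν - Finsupp.single j 1) (h.coeff ν * (ν j)) = 0 :=
      Finset.sum_eq_zero fun ν hν => by
        rw [hSh0 ν hν j hn, Nat.cast_zero, mul_zero, map_zero]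
    rw [hzero, map_zero]
  refine ⟨j, hjs, ?_⟩
  have h5 : eval yt (pderiv j (initialPart lam h))
      = eval y (pderiv j (initialPart lam h)) := by
    rw [hh₀, pderiv_sum_monomial, eval_sum_monomial, eval_sum_monomial]
    refine Finset.sum_congr rfl fun ν hν => ?_
    congr 1
    refine prod_pow_congr yt y _ fun i hi => ?_
    have his := hyty i hi
    rw [Finsupp.tsub_apply, hSh0 ν hν i his, Nat.zero_sub]
  have h6 : eval y (pderiv j (initialPart lam h)) = eval y (pderiv j h) := by
    have hrw : pderiv j h = pderiv j (∑ ν ∈ h.support, monomial ν (h.coeff ν)) := by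
      rw [← as_sum]
    rw [hh₀, hrw, pderiv_sum_monomial, pderiv_sum_monomial,
      eval_sum_monomial, eval_sum_monomial]
    refine Finset.sum_subset hShsub fun ν hνh hνSh => ?_
    obtain ⟨i, his, hνi⟩ := hnotmin ν hνh hνSh
    have hij : i ≠ j := by
      intro he
      rw [he] at his
      omega
    refine mul_eq_zero_of_right _ ?_
    refine Finset.prod_eq_zero (Finset.mem_univ i) ?_
    rw [Finsupp.tsub_apply, Finsupp.single_eq_of_ne' (Ne.symm hij), Nat.sub_zero, hy0 i his]
    exact zero_pow hνi
  rw [← h6, ← h5]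
  exact hEj
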